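/- Consider the discrete-time quantum walk search on the n-dimensional hypercube (N = 2ⁿ vertices, n ≥ 2) with marked set M = {i, j}, where i and j differ in exactly one bit. Let ψ(0) be the uniform initial state with all nN amplitudes equal to 1/√(nN), and ψ(t) = (U′)^t ψ(0). Then for every t ≥ 0, the probability of finding a marked vertex p_M(t) = Σ_{v∈M} Σ_c |ψ(t)(v,c)|² satisfies p_M(t) ≤ (2/(n·2ⁿ))·(2√((n−1)n³) + n(2n−1)); in particular p_M(t) = O(n²/N). -/

import Mathlib

/-- Discrete-time quantum walk on the `n`-dimensional hypercube.
Vertices are binary strings `v : Fin n → Bool`; basis states are `(v, c)` with coin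
direction `c : Fin n`. `flipBit v c` flips bit `c` of `v` (i.e. `v ⊕ e_c`). -/
def HypercubeWalk.flipBit (n : ℕ) (v : Fin n → Bool) (c : Fin n) : Fin n → Bool :=
  Function.update v c (!(v c))

/-- The shift operator `S`, with `S|v, c⟩ = |v ⊕ e_c, c⟩`. -/
noncomputable def HypercubeWalk.shift (n : ℕ) (ψ : (Fin n → Bool) × Fin n → ℂ) :
    (Fin n → Bool) × Fin n → ℂ :=
  fun e => ψ (HypercubeWalk.flipBit n e.1 e.2, e.2)

/-- The Grover coin `I ⊗ C`, `(Cψ)(v, c) = (2/n) Σ_{c'} ψ(v, c') − ψ(v, c)`. -/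
noncomputable def HypercubeWalk.coin (n : ℕ) (ψ : (Fin n → Bool) × Fin n → ℂ) :
    (Fin n → Bool) × Fin n → ℂ :=
  fun e => (2 / (n : ℂ)) * (∑ c' : Fin n, ψ (e.1, c')) - ψ e

/-- The query `Q ⊗ I`, flipping the sign at marked vertices. -/
noncomputable def HypercubeWalk.query (n : ℕ) (M : Finset (Fin n → Bool))
    (ψ : (Fin n → Bool) × Fin n → ℂ) : (Fin n → Bool) × Fin n → ℂ :=
  fun e => if e.1 ∈ M then -ψ e else ψ e

/-- One step of the search algorithm, `U' = S · (I ⊗ C) · (Q ⊗ I)`. -/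
noncomputable def HypercubeWalk.step (n : ℕ) (M : Finset (Fin n → Bool))
    (ψ : (Fin n → Bool) × Fin n → ℂ) : (Fin n → Bool) × Fin n → ℂ :=
  HypercubeWalk.shift n (HypercubeWalk.coin n (HypercubeWalk.query n M ψ))

namespace HypercubeWalk
variable {n : ℕ}

lemma flipBit_flipBit (v : Fin n → Bool) (c : Fin n) :
    flipBit n (flipBit n v c) c = v := by
  simp [flipBit, Function.update_idem]

lemma flipBit_ne (v : Fin n → Bool) (c : Fin n) : flipBit n v c ≠ v := by
  intro h
  have := congrFun h c
  simp [flipBit] at this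

lemma flipBit_c_inj {v : Fin n → Bool} {c c' : Fin n}
    (h : flipBit n v c = flipBit n v c') : c = c' := by
  by_contra hcc
  have := congrFun h c
  simp [flipBit, Function.update_apply, if_neg hcc] at this

/-- squared ℓ² norm -/
noncomputable def nsq (n : ℕ) (ψ : (Fin n → Bool) × Fin n → ℂ) : ℝ :=
  ∑ e : (Fin n → Bool) × Fin n, norm (ψ e) ^ 2

lemma shift_involutive :
    Function.Involutive
      (fun e : (Fin n → Bool) × Fin n => (flipBit n e.1 e.2, e.2)) := by
  intro e
  simp [flipBit_flipBit]

lemma nsq_shift (ψ : (Fin n → Bool) × Fin n → ℂ) : nsq n (shift n ψ) = nsq n ψ := by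
  unfold nsq shift
  exact Equiv.sum_comp (shift_involutive.toPerm _) (fun e => norm (ψ e) ^ 2)

lemma nsq_query (M : Finset (Fin n → Bool)) (ψ : (Fin n → Bool) × Fin n → ℂ) :
    nsq n (query n M ψ) = nsq n ψ := by
  unfold nsq query
  congr 1; funext e; split <;> simp

lemma coin_row (hn : n ≠ 0) (x : Fin n → ℂ) :
    ∑ c : Fin n, norm ((2 / (n : ℂ)) * (∑ c' : Fin n, x c') - x c) ^ 2
      = ∑ c : Fin n, norm (x c) ^ 2 := by
  have hnR : (n : ℝ) ≠ 0 := Nat.cast_ne_zero.mpr hn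
  set T : ℂ := ∑ c' : Fin n, x c' with hT
  have h2n : (2 / (n : ℂ)) = (((2 / n : ℝ)) : ℂ) := by push_cast; ring
  simp only [Complex.sq_norm, h2n]
  have expand : ∀ c : Fin n,
      Complex.normSq ((((2 / n : ℝ)) : ℂ) * T - x c)
        = (2 / (n:ℝ))^2 * Complex.normSq T + Complex.normSq (x c)
          - 2 * ((2 / (n:ℝ)) * ((T * (starRingEnd ℂ) (x c)).re)) := by
    intro c
    rw [Complex.normSq_sub]
    simp [Complex.normSq_mul, Complex.normSq_ofReal]
    ring_nf
  simp only [expand]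
  rw [Finset.sum_sub_distrib, Finset.sum_add_distrib]
  have h1 : ∑ _c : Fin n, (2 / (n:ℝ))^2 * Complex.normSq T
      = n * ((2 / (n:ℝ))^2 * Complex.normSq T) := by
    simp [Finset.sum_const, Finset.card_univ, mul_comm]
  have h2 : ∑ c : Fin n, 2 * ((2 / (n:ℝ)) * ((T * (starRingEnd ℂ) (x c)).re))
      = 2 * ((2 / (n:ℝ)) * Complex.normSq T) := by
    rw [← Finset.mul_sum, ← Finset.mul_sum, ← Complex.re_sum, ← Finset.mul_sum,
      ← map_sum (starRingEnd ℂ), ← hT, Complex.mul_conj]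
    simp
  rw [h1, h2]
  field_simp
  ring


lemma nsq_coin (hn : n ≠ 0) (ψ : (Fin n → Bool) × Fin n → ℂ) :
    nsq n (coin n ψ) = nsq n ψ := by
  unfold nsq coin
  rw [Fintype.sum_prod_type, Fintype.sum_prod_type]
  exact Finset.sum_congr rfl fun v _ => coin_row hn (fun c => ψ (v, c))

lemma nsq_step (hn : n ≠ 0) (M : Finset (Fin n → Bool))
    (ψ : (Fin n → Bool) × Fin n → ℂ) : nsq n (step n M ψ) = nsq n ψ := by
  rw [step, nsq_shift, nsq_coin hn, nsq_query]

lemma nsq_step_iter (hn : n ≠ 0) (M : Finset (Fin n → Bool)) (t : ℕ)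
    (ψ : (Fin n → Bool) × Fin n → ℂ) : nsq n ((step n M)^[t] ψ) = nsq n ψ := by
  induction t with
  | zero => simp
  | succ t ih => rw [Function.iterate_succ_apply', nsq_step hn, ih]

lemma step_add (M : Finset (Fin n → Bool)) (ψ χ : (Fin n → Bool) × Fin n → ℂ) :
    step n M (ψ + χ) = step n M ψ + step n M χ := by
  funext e
  simp only [step, shift, coin, query, Pi.add_apply]
  by_cases h : flipBit n e.1 e.2 ∈ M <;>
    simp [h, Finset.sum_add_distrib] <;> ring

lemma step_iter_fixed_add (M : Finset (Fin n → Bool))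
    (φ r : (Fin n → Bool) × Fin n → ℂ) (hφ : step n M φ = φ) (t : ℕ) :
    (step n M)^[t] (φ + r) = φ + (step n M)^[t] r := by
  induction t with
  | zero => simp
  | succ t ih => rw [Function.iterate_succ_apply', ih, step_add, hφ, Function.iterate_succ_apply']


/-- The stationary state: uniform amplitude `a` everywhere, except amplitude
`-(n-1)a` on the two coin states along the edge joining the marked vertices. -/
noncomputable def stat (n : ℕ) (i j : Fin n → Bool) (c₀ : Fin n) (a : ℝ) :
    (Fin n → Bool) × Fin n → ℂ :=
  fun e => if (e.1 = i ∨ e.1 = j) ∧ e.2 = c₀ then (-((((n : ℝ)) - 1) * a) : ℂ) else (a : ℂ)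

lemma sum_ite_coin (c₀ : Fin n) (X Y : ℂ) :
    ∑ c' : Fin n, (if c' = c₀ then X else Y) = X + ((n : ℂ) - 1) * Y := by
  have h : ∀ c' : Fin n, (if c' = c₀ then X else Y)
      = Y + (if c' = c₀ then X - Y else 0) := by
    intro c'; split <;> ring
  simp only [h, Finset.sum_add_distrib, Finset.sum_ite_eq', Finset.sum_const,
    Finset.card_univ, Fintype.card_fin, Finset.mem_univ, if_true, nsmul_eq_mul]
  push_cast; ring

lemma stat_fixed (hn : n ≠ 0) (i : Fin n → Bool) (c₀ : Fin n) (a : ℝ) :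
    step n {i, flipBit n i c₀} (stat n i (flipBit n i c₀) c₀ a)
      = stat n i (flipBit n i c₀) c₀ a := by
  set j := flipBit n i c₀ with hj
  have hji : flipBit n j c₀ = i := flipBit_flipBit i c₀
  have hnC : (n : ℂ) ≠ 0 := Nat.cast_ne_zero.mpr hn
  set X : ℂ := (-((((n : ℝ)) - 1) * a) : ℂ) with hX
  have hXa : X + ((n : ℂ) - 1) * (a : ℂ) = 0 := by rw [hX]; push_cast; ring
  have hmem : ∀ w : Fin n → Bool, w ∈ ({i, j} : Finset (Fin n → Bool)) ↔ (w = i ∨ w = j) := by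
    intro w; simp
  have hφm : ∀ w : Fin n → Bool, (w = i ∨ w = j) → ∀ c' : Fin n,
      stat n i j c₀ a (w, c') = if c' = c₀ then X else (a : ℂ) := by
    intro w hw c'
    simp only [stat, hw, true_and, hX]
  have hφu : ∀ w : Fin n → Bool, ¬(w = i ∨ w = j) → ∀ c' : Fin n,
      stat n i j c₀ a (w, c') = (a : ℂ) := by
    intro w hw c'
    simp only [stat, hw, false_and, if_false]
  funext e
  obtain ⟨v, c⟩ := e
  show (2 / (n : ℂ)) * (∑ c' : Fin n,
      query n {i,j} (stat n i j c₀ a) (flipBit n v c, c'))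
      - query n {i,j} (stat n i j c₀ a) (flipBit n v c, c) = stat n i j c₀ a (v, c)
  set w := flipBit n v c with hw
  have hvw : v = flipBit n w c := (flipBit_flipBit v c).symm
  by_cases hwm : w = i ∨ w = j
  · -- marked neighbour
    have hQ : ∀ c' : Fin n, query n {i,j} (stat n i j c₀ a) (w, c')
        = -(if c' = c₀ then X else (a : ℂ)) := by
      intro c'
      simp only [query, (hmem w).2 hwm, if_true, hφm w hwm c']
    simp only [hQ]
    rw [Finset.sum_neg_distrib, sum_ite_coin, hXa]
    simp only [neg_zero, mul_zero, zero_sub, neg_neg]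
    -- goal : (if c = c₀ then X else a) = stat (v, c)
    by_cases hc : c = c₀
    · subst hc
      have hv : v = i ∨ v = j := by
        rcases hwm with h | h
        · right; rw [hvw, h, hj]
        · left; rw [hvw, h, hji]
      simp only [stat, hv, true_and, if_true, if_pos rfl, hX]
    · have hv : ¬(v = i ∨ v = j) := by
        rintro (h | h)
        · rcases hwm with h' | h'
          · exact flipBit_ne v c (by rw [← hw]; exact h'.trans h.symm)
          · have hcc : flipBit n i c = flipBit n i c₀ := by rw [← h, ← hw, h', hj, h]
            exact hc (flipBit_c_inj hcc)
        · rcases hwm with h' | h'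
          · have hcc : flipBit n j c = flipBit n j c₀ := by rw [← h, ← hw, h', ← hji, h]
            exact hc (flipBit_c_inj hcc)
          · exact flipBit_ne v c (by rw [← hw]; exact h'.trans h.symm)
      simp only [stat, hv, false_and, if_false, if_neg hc]
  · -- unmarked neighbour
    have hQ : ∀ c' : Fin n, query n {i,j} (stat n i j c₀ a) (w, c') = (a : ℂ) := by
      intro c'
      simp only [query, hmem w, hwm, if_false, hφu w hwm c']
    simp only [hQ, Finset.sum_const, Finset.card_univ, Fintype.card_fin, nsmul_eq_mul]
    have hv : ¬((v = i ∨ v = j) ∧ c = c₀) := by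
      rintro ⟨h | h, rfl⟩
      · exact hwm (Or.inr (by rw [hw, h, hj]))
      · exact hwm (Or.inl (by rw [hw, h, hji]))
    simp only [stat, hv, if_false]
    field_simp
    ring


lemma sum_ite_coinR (c₀ : Fin n) (X Y : ℝ) :
    ∑ c' : Fin n, (if c' = c₀ then X else Y) = X + ((n : ℝ) - 1) * Y := by
  have h : ∀ c' : Fin n, (if c' = c₀ then X else Y)
      = Y + (if c' = c₀ then X - Y else 0) := by
    intro c'; split <;> ring
  simp only [h, Finset.sum_add_distrib, Finset.sum_ite_eq', Finset.sum_const,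
    Finset.card_univ, Fintype.card_fin, Finset.mem_univ, if_true, nsmul_eq_mul]
  ring

end HypercubeWalk

set_option maxHeartbeats 1000000 in
open HypercubeWalk in
theorem hypercube_two_adjacent_marked_prob_bound' (n : ℕ) (hn : 2 ≤ n)
    (i j : Fin n → Bool) (hij : ∃ c : Fin n, j = HypercubeWalk.flipBit n i c) :
    ∀ t : ℕ,
      ∑ v ∈ ({i, j} : Finset (Fin n → Bool)), ∑ c : Fin n,
        norm
          ((HypercubeWalk.step n {i, j})^[t]
            (fun _ => ((1 / Real.sqrt (n * 2 ^ n) : ℝ) : ℂ)) (v, c)) ^ 2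
      ≤ (2 / (n * 2 ^ n : ℝ)) *
          (2 * Real.sqrt (((n : ℝ) - 1) * n ^ 3) + n * (2 * n - 1)) := by
  obtain ⟨c₀, rfl⟩ := hij
  intro t
  set j := flipBit n i c₀ with hj
  have hn0 : n ≠ 0 := by omega
  have h1n : (1 : ℝ) ≤ (n : ℝ) := by exact_mod_cast (by omega : 1 ≤ n)
  have hn1 : (0 : ℝ) ≤ (n : ℝ) - 1 := by linarith
  have hij' : i ≠ j := by
    intro h
    exact flipBit_ne i c₀ (by rw [← hj, ← h])
  set K : ℝ := (n : ℝ) * 2 ^ n with hK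
  have hKpos : 0 < K := by
    have : (0:ℝ) < (n:ℝ) := by linarith
    positivity
  set a : ℝ := 1 / Real.sqrt K with ha
  have hapos : 0 < a := by
    have := Real.sqrt_pos.mpr hKpos
    positivity
  have ha2 : a ^ 2 = 1 / K := by
    rw [ha, div_pow, one_pow, Real.sq_sqrt hKpos.le]
  set φ := stat n i j c₀ a with hφ
  set ψ0 : (Fin n → Bool) × Fin n → ℂ := fun _ => ((a : ℝ) : ℂ) with hψ0
  set r : (Fin n → Bool) × Fin n → ℂ := ψ0 - φ with hr
  have hfix : step n {i, j} φ = φ := stat_fixed hn0 i c₀ a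
  have hdecomp : (step n {i, j})^[t] ψ0 = φ + (step n {i, j})^[t] r := by
    have h0 : ψ0 = φ + r := by
      funext e
      simp only [hr, Pi.add_apply, Pi.sub_apply]
      ring
    rw [h0, step_iter_fixed_add _ _ _ hfix]
  set rt := (step n {i, j})^[t] r with hrt
  -- values of r
  have hrval : ∀ e : (Fin n → Bool) × Fin n,
      r e = if (e.1 = i ∨ e.1 = j) ∧ e.2 = c₀ then (((n : ℝ) * a : ℝ) : ℂ) else 0 := by
    intro e
    rw [hr]
    simp only [Pi.sub_apply, hψ0, hφ, stat]
    split
    · push_cast; ring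
    · ring
  -- norm of r
  have hnsqr : nsq n r = 2 * (n : ℝ) ^ 2 / K := by
    unfold nsq
    rw [Fintype.sum_prod_type]
    have inner : ∀ v : Fin n → Bool,
        (∑ c : Fin n, norm (r (v, c)) ^ 2)
          = if v = i ∨ v = j then ((n:ℝ) * a) ^ 2 else 0 := by
      intro v
      by_cases hv : v = i ∨ v = j
      · have : ∀ c : Fin n, norm (r (v, c)) ^ 2
            = if c = c₀ then ((n:ℝ) * a) ^ 2 else 0 := by
          intro c
          rw [hrval (v, c)]
          simp only [hv, true_and]
          split
          · rw [Complex.norm_real, Real.norm_eq_abs, sq_abs]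
          · simp
        rw [Finset.sum_congr rfl fun c _ => this c, Finset.sum_ite_eq']
        simp [hv]
      · have : ∀ c : Fin n, norm (r (v, c)) ^ 2 = 0 := by
          intro c
          rw [hrval (v, c)]
          simp [hv]
        simp [this, hv]
    rw [Finset.sum_congr rfl fun v _ => inner v]
    have split2 : ∀ v : Fin n → Bool,
        (if v = i ∨ v = j then ((n:ℝ) * a) ^ 2 else 0)
          = (if v = i then ((n:ℝ) * a) ^ 2 else 0)
            + (if v = j then ((n:ℝ) * a) ^ 2 else 0) := by
      intro v
      by_cases h1 : v = i
      · subst h1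
        rw [if_pos (Or.inl rfl), if_pos rfl, if_neg hij', add_zero]
      · by_cases h2 : v = j
        · subst h2
          rw [if_pos (Or.inr rfl), if_neg h1, if_pos rfl, zero_add]
        · rw [if_neg (by tauto), if_neg h1, if_neg h2, add_zero]
    rw [Finset.sum_congr rfl fun v _ => split2 v, Finset.sum_add_distrib,
      Finset.sum_ite_eq', Finset.sum_ite_eq']
    simp only [Finset.mem_univ, if_true]
    rw [mul_pow, ha2]
    field_simp
    ring
  have hnsqrt : nsq n rt = 2 * (n : ℝ) ^ 2 / K := by
    rw [hrt, nsq_step_iter hn0, hnsqr]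
  -- the sum over marked vertices of |φ|²
  have hφval : ∀ c : Fin n, ∀ v, (v = i ∨ v = j) →
      norm (φ (v, c)) ^ 2 = if c = c₀ then (((n:ℝ) - 1) * a) ^ 2 else a ^ 2 := by
    intro c v hv
    have hcast : φ (v, c) = (((if c = c₀ then -((((n:ℝ)) - 1) * a) else a : ℝ)) : ℂ) := by
      simp only [hφ, stat, hv, true_and]
      split <;> push_cast <;> ring
    rw [hcast, Complex.norm_real, Real.norm_eq_abs, sq_abs]
    split <;> ring
  have hF : ∀ v, (v = i ∨ v = j) →
      (∑ c : Fin n, norm (φ (v, c)) ^ 2)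
        = ((n:ℝ) - 1) * (n:ℝ) * a ^ 2 := by
    intro v hv
    rw [Finset.sum_congr rfl fun c _ => hφval c v hv, sum_ite_coinR]
    ring
  -- setup sums over marked product set
  set s : Finset ((Fin n → Bool) × Fin n) := ({i, j} : Finset (Fin n → Bool)) ×ˢ Finset.univ with hs
  set f : (Fin n → Bool) × Fin n → ℝ := fun e => norm (φ e) with hf
  set g : (Fin n → Bool) × Fin n → ℝ := fun e => norm (rt e) with hg
  have hFs : ∑ e ∈ s, f e ^ 2 = 2 * ((n:ℝ) - 1) * (n:ℝ) / K := by
    rw [hs, Finset.sum_product, Finset.sum_pair hij']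
    simp only [hf]
    rw [hF i (Or.inl rfl), hF j (Or.inr rfl), ha2]
    field_simp; ring
  have hGs : ∑ e ∈ s, g e ^ 2 ≤ 2 * (n : ℝ) ^ 2 / K := by
    calc ∑ e ∈ s, g e ^ 2
        ≤ ∑ e : (Fin n → Bool) × Fin n, g e ^ 2 :=
          Finset.sum_le_sum_of_subset_of_nonneg (Finset.subset_univ s)
            (fun e _ _ => by positivity)
      _ = nsq n rt := rfl
      _ = 2 * (n : ℝ) ^ 2 / K := hnsqrt
  have hFnn : (0:ℝ) ≤ ∑ e ∈ s, f e ^ 2 := Finset.sum_nonneg fun e _ => by positivity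
  have hGnn : (0:ℝ) ≤ ∑ e ∈ s, g e ^ 2 := Finset.sum_nonneg fun e _ => by positivity
  have hfgnn : (0:ℝ) ≤ ∑ e ∈ s, f e * g e :=
    Finset.sum_nonneg fun e _ => mul_nonneg (by positivity) (by positivity)
  -- Cauchy–Schwarz
  have hCS : ∑ e ∈ s, f e * g e
      ≤ Real.sqrt (∑ e ∈ s, f e ^ 2) * Real.sqrt (∑ e ∈ s, g e ^ 2) := by
    rw [← Real.sqrt_mul hFnn]
    rw [Real.le_sqrt hfgnn (mul_nonneg hFnn hGnn)]
    exact Finset.sum_mul_sq_le_sq_mul_sq s f g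
  have hsqG : Real.sqrt (∑ e ∈ s, g e ^ 2) ≤ Real.sqrt (2 * (n : ℝ) ^ 2 / K) :=
    Real.sqrt_le_sqrt hGs
  -- the main quantity
  have hmain : ∑ v ∈ ({i, j} : Finset (Fin n → Bool)), ∑ c : Fin n,
      norm ((step n {i, j})^[t] ψ0 (v, c)) ^ 2
      ≤ (∑ e ∈ s, f e ^ 2) + 2 * (∑ e ∈ s, f e * g e) + (∑ e ∈ s, g e ^ 2) := by
    have key : (∑ v ∈ ({i, j} : Finset (Fin n → Bool)), ∑ c : Fin n,
        norm ((step n {i, j})^[t] ψ0 (v, c)) ^ 2)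
        = ∑ e ∈ s, norm ((step n {i, j})^[t] ψ0 e) ^ 2 := by
      rw [hs, Finset.sum_product]
    rw [key]
    have hb : ∀ e ∈ s, norm ((step n {i, j})^[t] ψ0 e) ^ 2
        ≤ f e ^ 2 + 2 * (f e * g e) + g e ^ 2 := by
      intro e _
      rw [hdecomp]
      have htri : norm (φ e + rt e) ≤ f e + g e := norm_add_le _ _
      have h2 : norm (φ e + rt e) ^ 2 ≤ (f e + g e) ^ 2 := by
        apply pow_le_pow_left₀ (by positivity) htri
      calc norm ((φ + rt) e) ^ 2 = norm (φ e + rt e) ^ 2 := rfl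
        _ ≤ (f e + g e) ^ 2 := h2
        _ = f e ^ 2 + 2 * (f e * g e) + g e ^ 2 := by ring
    calc ∑ e ∈ s, norm ((step n {i, j})^[t] ψ0 e) ^ 2
        ≤ ∑ e ∈ s, (f e ^ 2 + 2 * (f e * g e) + g e ^ 2) := Finset.sum_le_sum hb
      _ = (∑ e ∈ s, f e ^ 2) + 2 * (∑ e ∈ s, f e * g e) + (∑ e ∈ s, g e ^ 2) := by
          rw [Finset.sum_add_distrib, Finset.sum_add_distrib, Finset.mul_sum]
  -- the sqrt arithmetic
  have hD : (0:ℝ) ≤ ((n:ℝ) - 1) * (n:ℝ) ^ 3 := mul_nonneg hn1 (by positivity)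
  have hsqrt : Real.sqrt (2 * ((n:ℝ) - 1) * (n:ℝ) / K) * Real.sqrt (2 * (n : ℝ) ^ 2 / K)
      = (2 / K) * Real.sqrt (((n:ℝ) - 1) * (n:ℝ) ^ 3) := by
    rw [← Real.sqrt_mul (by positivity)]
    have heq : 2 * ((n:ℝ) - 1) * (n:ℝ) / K * (2 * (n : ℝ) ^ 2 / K)
        = (2 / K) ^ 2 * (((n:ℝ) - 1) * (n:ℝ) ^ 3) := by
      field_simp
    rw [heq, Real.sqrt_mul (by positivity), Real.sqrt_sq (by positivity)]
  -- final chain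
  calc ∑ v ∈ ({i, j} : Finset (Fin n → Bool)), ∑ c : Fin n,
      norm ((step n {i, j})^[t] ψ0 (v, c)) ^ 2
      ≤ (∑ e ∈ s, f e ^ 2) + 2 * (∑ e ∈ s, f e * g e) + (∑ e ∈ s, g e ^ 2) := hmain
    _ ≤ (2 * ((n:ℝ) - 1) * (n:ℝ) / K)
        + 2 * (Real.sqrt (2 * ((n:ℝ) - 1) * (n:ℝ) / K) * Real.sqrt (2 * (n : ℝ) ^ 2 / K))
        + 2 * (n : ℝ) ^ 2 / K := by
        have h1 : ∑ e ∈ s, f e * g e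
            ≤ Real.sqrt (2 * ((n:ℝ) - 1) * (n:ℝ) / K) * Real.sqrt (2 * (n : ℝ) ^ 2 / K) := by
          calc ∑ e ∈ s, f e * g e
              ≤ Real.sqrt (∑ e ∈ s, f e ^ 2) * Real.sqrt (∑ e ∈ s, g e ^ 2) := hCS
            _ ≤ Real.sqrt (2 * ((n:ℝ) - 1) * (n:ℝ) / K) * Real.sqrt (2 * (n : ℝ) ^ 2 / K) := by
                apply mul_le_mul
                · rw [hFs]
                · exact hsqG
                · positivity
                · positivity
        rw [hFs]
        linarith [hGs]
    _ = (2 / K) * (2 * Real.sqrt (((n : ℝ) - 1) * (n:ℝ) ^ 3) + (n:ℝ) * (2 * (n:ℝ) - 1)) := by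
        rw [hsqrt]
        field_simp
        ring
    _ = (2 / ((n:ℝ) * 2 ^ n : ℝ)) *
          (2 * Real.sqrt (((n : ℝ) - 1) * (n:ℝ) ^ 3) + (n:ℝ) * (2 * (n:ℝ) - 1)) := by rw [hK]

/-- For two adjacent marked vertices `i` and `j` of the `n`-dimensional hypercube
(`N = 2ⁿ` vertices), the probability of finding a marked vertex after any number of
steps of the search algorithm, starting from the uniform state, is at most
`(2/(n·2ⁿ))·(2√((n−1)n³) + n(2n−1))`; in particular it is `O(n²/N)`. -/
theorem hypercube_two_adjacent_marked_prob_bound (n : ℕ) (hn : 2 ≤ n)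
    (i j : Fin n → Bool) (hij : ∃ c : Fin n, j = HypercubeWalk.flipBit n i c) :
    ∀ t : ℕ,
      ∑ v ∈ ({i, j} : Finset (Fin n → Bool)), ∑ c : Fin n,
        ‖
          ((HypercubeWalk.step n {i, j})^[t]
            (fun _ => ((1 / Real.sqrt (n * 2 ^ n) : ℝ) : ℂ)) (v, c))‖ ^ 2
      ≤ (2 / (n * 2 ^ n : ℝ)) *
          (2 * Real.sqrt (((n : ℝ) - 1) * n ^ 3) + n * (2 * n - 1)) := by
  exact hypercube_two_adjacent_marked_prob_bound' n hn i j hij
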